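/- For all integers m, n ≥ 0, the harmonic numbers satisfy C(m+n, n) · H_{n+m} = ∑_{k=0}^{n} H_k · C(m+n-k-1, n-k) + H_m · C(m+n, n), as an identity of rational numbers. -/

import Mathlib

open Finset

lemma chooseFact (M n : ℕ) :
    (M+1) * (M+n+2).choose (n+1) = (M+n+2) * (M+n+1).choose (n+1) := by
  have h := Nat.add_one_mul_choose_eq (M+n+1) M
  have hs : (M+n+1).choose M = (M+n+1).choose (n+1) := by
    rw [← Nat.choose_symm (by omega)]; congr 1; omega
  have hs2 : (M+n+2).choose (M+1) = (M+n+2).choose (n+1) := by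
    rw [← Nat.choose_symm (by omega)]; congr 1; omega
  rw [hs] at h; rw [show M+n+1+1 = M+n+2 from rfl, hs2] at h
  rw [mul_comm]; exact h.symm

lemma Grec (M n : ℕ) :
    ((M+n+2).choose (n+1) : ℚ) * (harmonic (M+n+2) - harmonic (M+1)) =
      ((M+n+1).choose n : ℚ) * (harmonic (M+n+1) - harmonic (M+1)) +
      ((M+n+1).choose (n+1) : ℚ) * (harmonic (M+n+1) - harmonic M) := by
  have h1 : ((M:ℚ)+n+2) ≠ 0 := by positivity
  have h2 : ((M:ℚ)+1) ≠ 0 := by positivity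
  have hp : ((M+n+2).choose (n+1) : ℚ) = (M+n+1).choose n + (M+n+1).choose (n+1) := by
    rw [show M+n+2 = (M+n+1)+1 from rfl, Nat.choose_succ_succ']
    push_cast; ring
  have hc : ((M:ℚ)+1) * ((M+n+2).choose (n+1) : ℚ)
      = ((M:ℚ)+n+2) * ((M+n+1).choose (n+1) : ℚ) := by
    have h := congrArg (Nat.cast : ℕ → ℚ) (chooseFact M n)
    push_cast at h; linear_combination h
  have key : ((M+n+2).choose (n+1) : ℚ) * ((M:ℚ)+n+2)⁻¹
      = ((M+n+1).choose (n+1) : ℚ) * ((M:ℚ)+1)⁻¹ := by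
    rw [← div_eq_mul_inv, ← div_eq_mul_inv, div_eq_div_iff h1 h2]
    linear_combination hc
  rw [harmonic_succ (M+n+1), harmonic_succ M]
  push_cast
  linear_combination (harmonic (M+n+1) - harmonic M - ((M:ℚ)+1)⁻¹) * hp + key

lemma sumH (n : ℕ) : ∑ k ∈ range (n+1), harmonic k = (n+1) * harmonic (n+1) - (n+1) := by
  induction n with
  | zero => simp [harmonic_succ]
  | succ n ih =>
    rw [Finset.sum_range_succ, ih, harmonic_succ (n+1)]
    push_cast
    field_simp
    ring

lemma keyLemma (m : ℕ) : ∀ n : ℕ,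
    ((m+1+n).choose n : ℚ) * (harmonic (n+m+1) - harmonic (m+1)) =
      ∑ k ∈ Finset.range (n+1), harmonic k * ((m + (n-k)).choose (n-k) : ℚ) := by
  induction m with
  | zero =>
    intro n
    simp only [Nat.zero_add, zero_add]
    rw [show 1+n = n+1 from by omega, Nat.choose_succ_self_right]
    have hs : ∑ k ∈ Finset.range (n+1), harmonic k * ((n-k).choose (n-k) : ℚ)
        = ∑ k ∈ Finset.range (n+1), harmonic k := by
      refine Finset.sum_congr rfl fun k _ => ?_
      simp [Nat.choose_self]
    rw [hs, sumH n, show n+0+1 = n+1 from by omega]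
    have h1 : harmonic 1 = 1 := by simp [harmonic_succ]
    rw [h1]
    push_cast
    ring
  | succ m ih =>
    intro n
    induction n with
    | zero => simp
    | succ n ihn =>
      have ih2 := ih (n+1)
      -- rewrite sums
      rw [Finset.sum_range_succ] at ih2 ⊢
      simp only [Nat.sub_self, Nat.add_zero, Nat.choose_zero_right, Nat.cast_one, mul_one] at ih2 ⊢
      -- Pascal split inside goal sum
      have hsplit : ∑ k ∈ Finset.range (n+1), harmonic k * ((m+1 + (n+1-k)).choose (n+1-k) : ℚ)
          = (∑ k ∈ Finset.range (n+1), harmonic k * ((m+1 + (n-k)).choose (n-k) : ℚ))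
            + ∑ k ∈ Finset.range (n+1), harmonic k * ((m + (n+1-k)).choose (n+1-k) : ℚ) := by
        rw [← Finset.sum_add_distrib]
        refine Finset.sum_congr rfl fun k hk => ?_
        have hk' : k ≤ n := by simpa [Nat.lt_succ_iff] using hk
        have hch : (m+1+(n+1-k)).choose (n+1-k)
            = (m+1+(n-k)).choose (n-k) + (m+(n+1-k)).choose (n+1-k) := by
          rw [show m+(n+1-k) = m+1+(n-k) from by omega,
              show n+1-k = (n-k)+1 from by omega,
              show m+1+((n-k)+1) = (m+1+(n-k))+1 from by omega,
              Nat.choose_succ_succ]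
        rw [hch]
        push_cast
        ring
      rw [hsplit]
      -- normalize indices
      rw [show m+1+1+(n+1) = m+1+n+2 from by omega,
          show n+1+(m+1)+1 = m+1+n+2 from by omega]
      rw [show m+1+1+n = m+1+n+1 from by omega,
          show n+(m+1)+1 = m+1+n+1 from by omega] at ihn
      rw [show m+1+(n+1) = m+1+n+1 from by omega,
          show n+1+m+1 = m+1+n+1 from by omega] at ih2
      linear_combination ihn + ih2 + Grec (m+1) n


/-- **Recurrence for harmonic numbers** (Theorem 2.2).
For all integers `m, n ≥ 0`,
`C(m+n, n) ⬝ H_{n+m} = ∑_{k=0}^{n} H_k ⬝ C(m+n-k-1, n-k) + H_m ⬝ C(m+n, n)`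
as rational numbers. -/
theorem harmonic_recurrence (m n : ℕ) :
    ((m + n).choose n : ℚ) * harmonic (n + m) =
      ∑ k ∈ Finset.range (n + 1), harmonic k * ((m + n - k - 1).choose (n - k) : ℚ) +
        harmonic m * ((m + n).choose n : ℚ) := by
  match m with
  | 0 =>
    simp only [Nat.zero_add, zero_add, Nat.add_zero, add_zero]
    rw [Finset.sum_range_succ]
    have hz : ∑ k ∈ Finset.range n, harmonic k * ((n-k-1).choose (n-k) : ℚ) = 0 := by
      refine Finset.sum_eq_zero fun k hk => ?_
      have : (n-k-1).choose (n-k) = 0 := Nat.choose_eq_zero_of_lt (by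
        have := Finset.mem_range.mp hk; omega)
      simp [this]
    rw [hz]
    simp [Nat.choose_self, harmonic_zero]
  | m+1 =>
    have key := keyLemma m n
    have hs : ∑ k ∈ Finset.range (n+1), harmonic k * ((m+1+n-k-1).choose (n-k) : ℚ)
        = ∑ k ∈ Finset.range (n+1), harmonic k * ((m + (n-k)).choose (n-k) : ℚ) := by
      refine Finset.sum_congr rfl fun k hk => ?_
      have hk' : k ≤ n := by simpa [Nat.lt_succ_iff] using hk
      rw [show m+1+n-k-1 = m+(n-k) from by omega]
    rw [hs]
    rw [show m+1+n = m+1+n from rfl] at key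
    rw [show n+(m+1) = n+m+1 from by omega]
    linear_combination key
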